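/- Let m ≥ 1 and let r_1, ..., r_m be positive real numbers. Let L̂ be the Laplacian of the weighted path on m vertices with edge weights r_1, ..., r_{m-1} (for m = 1, L̂ is the 1×1 zero matrix), and let B_1 = L̂ + 2 r_m e_m e_mᵀ, where e_m is the m-th standard basis vector. Then det B_1 = 2 r_1 r_2 ⋯ r_m. -/

import Mathlib

open Matrix

noncomputable def pathLaplacian (n : ℕ) (r : ℕ → ℝ) : Matrix (Fin n) (Fin n) ℝ :=
  Matrix.of fun j k =>
    if (j : ℕ) = (k : ℕ) then
      (if (j : ℕ) = 0 then 0 else r (j : ℕ)) + (if (j : ℕ) = n - 1 then 0 else r ((j : ℕ) + 1))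
    else if (j : ℕ) + 1 = (k : ℕ) then -r ((j : ℕ) + 1)
    else if (k : ℕ) + 1 = (j : ℕ) then -r ((k : ℕ) + 1)
    else 0

noncomputable def pathC (m : ℕ) (r : ℕ → ℝ) : Matrix (Fin m) (Fin m) ℝ :=
  Matrix.of fun i j =>
    if (i : ℕ) = (j : ℕ) then
      (if (i : ℕ) = m - 1 then Real.sqrt (2 * r m) else Real.sqrt (r ((i : ℕ) + 1)))
    else if (i : ℕ) + 1 = (j : ℕ) then -Real.sqrt (r ((i : ℕ) + 1))
    else 0

set_option maxHeartbeats 1200000 in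
lemma pathC_factor (m : ℕ) (hm : 1 ≤ m) (r : ℕ → ℝ)
    (hr : ∀ j, 1 ≤ j → j ≤ m → 0 < r j) :
    pathLaplacian m r +
        (2 * r m) • Matrix.single (⟨m - 1, Nat.sub_lt hm Nat.one_pos⟩ : Fin m)
          (⟨m - 1, Nat.sub_lt hm Nat.one_pos⟩ : Fin m) (1 : ℝ) = (pathC m r)ᵀ * pathC m r := by
  have h1 : ∀ i : ℕ, i + 1 ≤ m → Real.sqrt (r (i + 1)) * Real.sqrt (r (i + 1)) = r (i + 1) :=
    fun i hi => Real.mul_self_sqrt (le_of_lt (hr _ (by omega) hi))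
  have h2 : Real.sqrt (2 * r m) * Real.sqrt (2 * r m) = 2 * r m :=
    Real.mul_self_sqrt (by have := hr m hm le_rfl; nlinarith)
  ext j k
  have hsum : ((pathC m r)ᵀ * pathC m r) j k = ∑ i, pathC m r i j * pathC m r i k := by
    simp [Matrix.mul_apply]
  rw [hsum]
  rcases Nat.eq_zero_or_pos (j : ℕ) with h0 | h0
  · have hj := j.isLt
    have hk := k.isLt
    rw [Finset.sum_eq_single j]
    · simp only [pathLaplacian, pathC, Matrix.add_apply, Matrix.smul_apply,
        Matrix.single, Matrix.of_apply, smul_eq_mul, Fin.ext_iff, h0]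
      rcases (show (k : ℕ) = 0 ∨ (k : ℕ) = 1 ∨ ((k : ℕ) ≠ 0 ∧ (k : ℕ) ≠ 1) by omega) with
        hk' | hk' | ⟨hk1, hk2⟩
      · simp only [hk']
        split_ifs <;> first | omega | exact (by assumption : False).elim | nlinarith [h1 0 (by omega), h2]
      · simp only [hk']
        split_ifs <;> first | omega | exact (by assumption : False).elim | nlinarith [h1 0 (by omega), h2]
      · split_ifs <;> first | omega | exact (by assumption : False).elim | ring
    · intro b _ hb
      have hb' : (b : ℕ) ≠ (j : ℕ) := fun h => hb (Fin.ext h)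
      simp only [pathC, Matrix.of_apply]
      split_ifs <;> first | omega | exact (by assumption : False).elim | ring
    · intro h; exact absurd (Finset.mem_univ j) h
  · obtain ⟨p, hp⟩ : ∃ p, (j : ℕ) = p + 1 := ⟨(j : ℕ) - 1, by omega⟩
    set prev : Fin m := ⟨p, by omega⟩ with hprev
    have hne : prev ≠ j := by
      intro h
      have : (prev : ℕ) = (j : ℕ) := congrArg Fin.val h
      simp only [hprev] at this; omega
    have hsub : ∑ i, pathC m r i j * pathC m r i k =
        ∑ i ∈ ({prev, j} : Finset (Fin m)), pathC m r i j * pathC m r i k := by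
      refine (Finset.sum_subset (Finset.subset_univ _) ?_).symm
      intro b _ hb
      simp only [Finset.mem_insert, Finset.mem_singleton, not_or] at hb
      have hb1 : (b : ℕ) ≠ p := fun h => hb.1 (Fin.ext h)
      have hb2 : (b : ℕ) ≠ (j : ℕ) := fun h => hb.2 (Fin.ext h)
      simp only [pathC, Matrix.of_apply]
      split_ifs <;> first | omega | exact (by assumption : False).elim | ring
    rw [hsub, Finset.sum_pair hne]
    have hj := j.isLt
    have hk := k.isLt
    simp only [pathLaplacian, pathC, Matrix.add_apply, Matrix.smul_apply,
      Matrix.single, Matrix.of_apply, smul_eq_mul, Fin.ext_iff, hprev, hp]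
    rcases (show (k : ℕ) = p ∨ (k : ℕ) = p + 1 ∨ (k : ℕ) = p + 2 ∨
        ((k : ℕ) ≠ p ∧ (k : ℕ) ≠ p + 1 ∧ (k : ℕ) ≠ p + 2) by omega) with
      hk' | hk' | hk' | ⟨hk1, hk2, hk3⟩
    · simp only [hk']
      split_ifs <;> first | omega | exact (by assumption : False).elim | nlinarith [h1 p (by omega), h1 (p + 1) (by omega), h2]
    · simp only [hk']
      split_ifs <;> first | omega | exact (by assumption : False).elim | nlinarith [h1 p (by omega), h1 (p + 1) (by omega), h2]
    · simp only [hk']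
      split_ifs <;> first | omega | exact (by assumption : False).elim | nlinarith [h1 p (by omega), h1 (p + 1) (by omega), h2]
    · split_ifs <;> first | omega | exact (by assumption : False).elim | ring

/-- `det (L̂ + 2 rₘ eₘ eₘᵀ) = 2 r₁ r₂ ⋯ rₘ`, where `L̂` is the Laplacian of the
weighted path on `m` vertices with edge weights `r 1, …, r (m-1)`. -/
theorem det_perturbed_path_laplacian (m : ℕ) (hm : 1 ≤ m) (r : ℕ → ℝ)
    (hr : ∀ j, 1 ≤ j → j ≤ m → 0 < r j) :
    (pathLaplacian m r +
        (2 * r m) • Matrix.single (⟨m - 1, by omega⟩ : Fin m)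
          (⟨m - 1, by omega⟩ : Fin m) (1 : ℝ)).det =
      2 * ∏ j ∈ Finset.Icc 1 m, r j := by
  rw [pathC_factor m hm r hr, Matrix.det_mul, Matrix.det_transpose]
  have htri : (pathC m r).BlockTriangular id := by
    intro i j hij
    have : (j : ℕ) < (i : ℕ) := hij
    simp only [pathC, Matrix.of_apply]
    split_ifs <;> first | omega | rfl
  rw [Matrix.det_of_upperTriangular htri]
  obtain ⟨n, rfl⟩ : ∃ n, m = n + 1 := ⟨m - 1, by omega⟩
  rw [Fin.prod_univ_castSucc]
  have hc : ∀ i : Fin n, pathC (n + 1) r i.castSucc i.castSucc =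
      Real.sqrt (r ((i : ℕ) + 1)) := by
    intro i
    have hi := i.isLt
    simp only [pathC, Matrix.of_apply, Fin.coe_castSucc]
    rw [if_pos trivial, if_neg (by omega)]
  have hl : pathC (n + 1) r (Fin.last n) (Fin.last n) = Real.sqrt (2 * r (n + 1)) := by
    simp only [pathC, Matrix.of_apply, Fin.val_last]
    rw [if_pos trivial, if_pos (by omega)]
  simp only [hc, hl]
  have hX : (∏ i : Fin n, Real.sqrt (r ((i : ℕ) + 1))) *
      (∏ i : Fin n, Real.sqrt (r ((i : ℕ) + 1))) = ∏ i : Fin n, r ((i : ℕ) + 1) := by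
    rw [← Finset.prod_mul_distrib]
    refine Finset.prod_congr rfl fun i _ => ?_
    exact Real.mul_self_sqrt (le_of_lt (hr _ (by omega) (by have := i.isLt; omega)))
  have hs : Real.sqrt (2 * r (n + 1)) * Real.sqrt (2 * r (n + 1)) = 2 * r (n + 1) :=
    Real.mul_self_sqrt (by have := hr (n + 1) (by omega) le_rfl; nlinarith)
  have hprod : ∏ i : Fin n, r ((i : ℕ) + 1) = ∏ j ∈ Finset.Icc 1 n, r j := by
    rw [Fin.prod_univ_eq_prod_range (fun x => r (x + 1)) n,
      show Finset.Icc 1 n = Finset.Ico 1 (n + 1) by rw [Finset.Ico_add_one_right_eq_Icc],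
      Finset.prod_Ico_eq_prod_range]
    simp only [Nat.add_sub_cancel]
    exact Finset.prod_congr rfl fun i _ => by rw [Nat.add_comm]
  rw [Finset.prod_Icc_succ_top (by omega : 1 ≤ n + 1)]
  calc (∏ i : Fin n, Real.sqrt (r ((i : ℕ) + 1))) * Real.sqrt (2 * r (n + 1)) *
        ((∏ i : Fin n, Real.sqrt (r ((i : ℕ) + 1))) * Real.sqrt (2 * r (n + 1)))
      = ((∏ i : Fin n, Real.sqrt (r ((i : ℕ) + 1))) *
          (∏ i : Fin n, Real.sqrt (r ((i : ℕ) + 1)))) *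
        (Real.sqrt (2 * r (n + 1)) * Real.sqrt (2 * r (n + 1))) := by ring
    _ = (∏ j ∈ Finset.Icc 1 n, r j) * (2 * r (n + 1)) := by rw [hX, hs, hprod]
    _ = 2 * ((∏ j ∈ Finset.Icc 1 n, r j) * r (n + 1)) := by ring
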